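/- Let S be a finite signature. For every event ρ and every allowed intervention Y ← y ∈ I, AX+_basic proves [Y ← y]ρ ⇔ [Y ← y](⋀_{v ⊨ ¬ρ} ¬(V = v)), where the conjunction ranges over all assignments v ∈ R(V) that do not satisfy ρ, and V = v abbreviates ⋀_{X ∈ V} X = v[X]. -/

import Mathlib

namespace Causal

/-- A signature: exogenous variables `U`, endogenous variables `V`, a universe
of values `Val`, range functions `RU`, `RV`, and a set `Int` of allowed
interventions (partial assignments of in-range values to endogenous variables). -/
structure Signature : Type 1 where
  U : Type
  V : Type
  Val : Type
  RU : U → Set Val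
  RV : V → Set Val
  RU_nonempty : ∀ Y, (RU Y).Nonempty
  RV_nonempty : ∀ X, (RV X).Nonempty
  Int : Set (V → Option Val)
  Int_ok : ∀ I ∈ Int, ∀ X x, I X = some x → x ∈ RV X

variable {S : Signature}

/-- A finite signature: finitely many variables, each with finite range. -/
def Signature.IsFinite (S : Signature) : Prop :=
  Finite S.U ∧ Finite S.V ∧ (∀ Y, (S.RU Y).Finite) ∧ (∀ X, (S.RV X).Finite)

/-- An intervention is valid if it only sets variables to values in their ranges. -/
def ValidInt (S : Signature) (I : S.V → Option S.Val) : Prop :=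
  ∀ X x, I X = some x → x ∈ S.RV X

/-- A universal signature: all (valid) interventions are allowed. -/
def Signature.Universal (S : Signature) : Prop :=
  S.Int = {I | ValidInt S I}

/-- A context: an assignment of in-range values to the exogenous variables. -/
def Context (S : Signature) : Type := {u : S.U → S.Val // ∀ Y, u Y ∈ S.RU Y}

/-- An assignment of in-range values to the endogenous variables (an outcome). -/
def Assignment (S : Signature) : Type := {v : S.V → S.Val // ∀ X, v X ∈ S.RV X}

open Classical in
/-- `updInt I X x` is the intervention `I; X ← x`. -/
noncomputable def updInt (I : S.V → Option S.Val) (X : S.V) (x : S.Val) :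
    S.V → Option S.Val :=
  fun Y => if Y = X then some x else I Y

/-- Events: Boolean combinations of primitive events `X = x` (with `x ∈ R(X)`). -/
inductive Event (S : Signature) : Type where
  | tru : Event S
  | prim : (X : S.V) → (x : S.Val) → x ∈ S.RV X → Event S
  | not : Event S → Event S
  | and : Event S → Event S → Event S
  | or : Event S → Event S → Event S

namespace Event

def imp (a b : Event S) : Event S := Event.or (Event.not a) b

/-- Satisfaction of an event by an assignment. -/
def sat (v : Assignment S) : Event S → Prop
  | .tru => True
  | .prim X x _ => v.1 X = x
  | .not e => ¬ Event.sat v e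
  | .and a b => Event.sat v a ∧ Event.sat v b
  | .or a b => Event.sat v a ∨ Event.sat v b

/-- Boolean evaluation of an event under an arbitrary valuation of its atoms;
used to define propositional tautologies. -/
def evalB (val : S.V → S.Val → Bool) : Event S → Bool
  | .tru => true
  | .prim X x _ => val X x
  | .not e => !(Event.evalB val e)
  | .and a b => Event.evalB val a && Event.evalB val b
  | .or a b => Event.evalB val a || Event.evalB val b

/-- An event is a propositional tautology if it is true under every Boolean
valuation of its primitive events. -/
def Taut (e : Event S) : Prop := ∀ val, Event.evalB val e = true

/-- The value `x` of variable `X` is mentioned in the event. -/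
def mentionsVal (X : S.V) (x : S.Val) : Event S → Prop
  | .tru => False
  | .prim X' x' _ => X' = X ∧ x' = x
  | .not e => Event.mentionsVal X x e
  | .and a b => Event.mentionsVal X x a ∨ Event.mentionsVal X x b
  | .or a b => Event.mentionsVal X x a ∨ Event.mentionsVal X x b

def bigAnd (l : List (Event S)) : Event S := l.foldr Event.and Event.tru

def bigOr (l : List (Event S)) : Event S := l.foldr Event.or (Event.not Event.tru)

/-- The disjunction `⋁_{x ∈ l} X = x`. -/
def disjEq (X : S.V) (l : List {x : S.Val // x ∈ S.RV X}) : Event S :=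
  bigOr (l.map fun x => Event.prim X x.1 x.2)

/-- The conjunction `⋀ X = x` over a list of (variable, value) pairs. -/
def conjEqL (l : List ((X : S.V) × {x : S.Val // x ∈ S.RV X})) : Event S :=
  bigAnd (l.map fun p => Event.prim p.1 p.2.1 p.2.2)

/-- Conjunctive formulas: conjunctions of literals `X = x` and `X ≠ x`. -/
inductive Conjunctive : Event S → Prop
  | tru : Conjunctive Event.tru
  | eq (X x hx) : Conjunctive (Event.prim X x hx)
  | ne (X x hx) : Conjunctive (Event.not (Event.prim X x hx))
  | and {a b} : Conjunctive a → Conjunctive b → Conjunctive (Event.and a b)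

/-- The set of conjuncts of a (conjunctive) formula. -/
def conjuncts : Event S → Set (Event S)
  | .tru => ∅
  | .and a b => Event.conjuncts a ∪ Event.conjuncts b
  | e => {e}

/-- Membership in the restricted language: only named variables and named values. -/
def InLang (W : Set S.V) (R' : S.V → Set S.Val) : Event S → Prop
  | .tru => True
  | .prim X x _ => X ∈ W ∧ x ∈ R' X
  | .not e => Event.InLang W R' e
  | .and a b => Event.InLang W R' a ∧ Event.InLang W R' b
  | .or a b => Event.InLang W R' a ∧ Event.InLang W R' b

end Event

/-- Causal formulas: Boolean combinations of atomic formulas `[Y ← y]φ`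
with `Y ← y` an allowed intervention and `φ` an event. -/
inductive CForm (S : Signature) : Type where
  | tru : CForm S
  | box : (I : S.V → Option S.Val) → I ∈ S.Int → Event S → CForm S
  | not : CForm S → CForm S
  | and : CForm S → CForm S → CForm S
  | or : CForm S → CForm S → CForm S

namespace CForm

def imp (a b : CForm S) : CForm S := CForm.or (CForm.not a) b

def iff (a b : CForm S) : CForm S := CForm.and (imp a b) (imp b a)

/-- `⟨Y ← y⟩φ` abbreviates `¬[Y ← y]¬φ`. -/
def dia (I : S.V → Option S.Val) (hI : I ∈ S.Int) (e : Event S) : CForm S :=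
  CForm.not (CForm.box I hI (Event.not e))

/-- Satisfaction of a causal formula at a context, relative to an outcome map `O`. -/
def sat (O : (I : S.V → Option S.Val) → I ∈ S.Int → Context S → Set (Assignment S))
    (u : Context S) : CForm S → Prop
  | .tru => True
  | .box I hI e => ∀ v ∈ O I hI u, e.sat v
  | .not φ => ¬ CForm.sat O u φ
  | .and a b => CForm.sat O u a ∧ CForm.sat O u b
  | .or a b => CForm.sat O u a ∨ CForm.sat O u b

/-- Boolean evaluation of a causal formula under an arbitrary valuation of its
atomic formulas; used to define propositional tautologies. -/
def evalB (val : (S.V → Option S.Val) → Event S → Bool) : CForm S → Bool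
  | .tru => true
  | .box I _ e => val I e
  | .not φ => !(CForm.evalB val φ)
  | .and a b => CForm.evalB val a && CForm.evalB val b
  | .or a b => CForm.evalB val a || CForm.evalB val b

/-- A causal formula is an instance of a propositional tautology if it is true
under every Boolean valuation of its atomic formulas. -/
def Taut (φ : CForm S) : Prop := ∀ val, CForm.evalB val φ = true

/-- The value `x` of variable `X` is mentioned in the causal formula
(either in a primitive event or in an intervention). -/
def mentionsVal (X : S.V) (x : S.Val) : CForm S → Prop
  | .tru => False
  | .box I _ e => I X = some x ∨ e.mentionsVal X x
  | .not φ => CForm.mentionsVal X x φ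
  | .and a b => CForm.mentionsVal X x a ∨ CForm.mentionsVal X x b
  | .or a b => CForm.mentionsVal X x a ∨ CForm.mentionsVal X x b

def bigAnd (l : List (CForm S)) : CForm S := l.foldr CForm.and CForm.tru

def bigOr (l : List (CForm S)) : CForm S := l.foldr CForm.or (CForm.not CForm.tru)

/-- Membership in the restricted language `L_{W,R',I'}(S)`. -/
def InLang (W : Set S.V) (R' : S.V → Set S.Val) (I' : Set (S.V → Option S.Val)) :
    CForm S → Prop
  | .tru => True
  | .box I _ e => I ∈ I' ∧ e.InLang W R'
  | .not φ => CForm.InLang W R' I' φ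
  | .and a b => CForm.InLang W R' I' a ∧ CForm.InLang W R' I' b
  | .or a b => CForm.InLang W R' I' a ∧ CForm.InLang W R' I' b

end CForm

/-- A structural equations model over `S`: each endogenous variable gets an
equation determining its value from the values of all other variables
(formally, `F X u v` does not depend on `v X`). -/
structure SEM (S : Signature) where
  F : S.V → (S.U → S.Val) → (S.V → S.Val) → S.Val
  F_range : ∀ X uu vv, F X uu vv ∈ S.RV X
  F_indep_self : ∀ X uu vv vv', (∀ Y, Y ≠ X → vv Y = vv' Y) → F X uu vv = F X uu vv'

namespace SEM

/-- The outcomes of a SEM under an intervention: solutions of the modified equations. -/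
def outcomes (M : SEM S) (u : Context S) (I : S.V → Option S.Val) :
    Set (Assignment S) :=
  {v | ∀ X, (∀ x, I X = some x → v.1 X = x) ∧ (I X = none → v.1 X = M.F X u.1 v.1)}

def sat (M : SEM S) (u : Context S) (φ : CForm S) : Prop :=
  φ.sat (fun I _ u' => M.outcomes u' I) u

def Valid (M : SEM S) (φ : CForm S) : Prop := ∀ u, M.sat u φ

/-- `X` is independent of `Y` in context `uu`: the equation for `X` does not
depend on the value of `Y`. -/
def IndepAt (M : SEM S) (uu : S.U → S.Val) (X Y : S.V) : Prop :=
  ∀ vv vv', (∀ Z, Z ≠ Y → vv Z = vv' Z) → M.F X uu vv = M.F X uu vv'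

/-- An acyclic (recursive) SEM. -/
def Acyclic (M : SEM S) : Prop :=
  ∀ u : Context S, ∃ lt : S.V → S.V → Prop, IsStrictTotalOrder S.V lt ∧
    ∀ X Y, lt X Y → M.IndepAt u.1 X Y

end SEM

/-- A generalized structural equations model: an arbitrary (effective) map from
allowed interventions and contexts to sets of outcomes. -/
structure GSEM (S : Signature) where
  F : (I : S.V → Option S.Val) → I ∈ S.Int → Context S → Set (Assignment S)
  effective : ∀ I hI u v, v ∈ F I hI u → ∀ X x, I X = some x → v.1 X = x

namespace GSEM

def sat (M : GSEM S) (u : Context S) (φ : CForm S) : Prop :=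
  φ.sat M.F u

def Valid (M : GSEM S) (φ : CForm S) : Prop := ∀ u, M.sat u φ

/-- A finitary GSEM: all outcome sets are finite. -/
def Finitary (M : GSEM S) : Prop := ∀ I hI u, (M.F I hI u).Finite

end GSEM

/-- Equivalence of two GSEMs: same outcomes for all contexts and allowed interventions. -/
def GSEM.equiv (M M' : GSEM S) : Prop := ∀ I hI u, M.F I hI u = M'.F I hI u

/-- `L(S)`-equivalence of two GSEMs: they agree on all causal formulas. -/
def GSEM.LEquiv (M M' : GSEM S) : Prop := ∀ u φ, M.sat u φ ↔ M'.sat u φ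

/-- Equivalence of a SEM and a GSEM. -/
def SEM.equivGSEM (M : SEM S) (M' : GSEM S) : Prop :=
  ∀ (I : S.V → Option S.Val) (hI : I ∈ S.Int) (u : Context S),
    M.outcomes u I = M'.F I hI u

/-- The projection of an outcome set to a single variable. -/
def projSet (T : Set (Assignment S)) (Y : S.V) : Set S.Val := (fun v => v.1 Y) '' T

/-- The restriction of an outcome set to a set of variables. -/
def restrictSet (T : Set (Assignment S)) (Wv : Set S.V) : Set (Wv → S.Val) :=
  (fun (v : Assignment S) (Y : Wv) => v.1 Y.1) '' T

/-! ### Axiom schemas -/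

/-- D0: all instances of propositional tautologies. -/
def AxD0 (S : Signature) : Set (CForm S) := {φ | φ.Taut}

/-- D1 (functionality): `[Y ← y](X = x ⇒ X ≠ x')` for `x ≠ x'`. -/
def AxD1 (S : Signature) : Set (CForm S) :=
  {φ | ∃ (I : S.V → Option S.Val) (hI : I ∈ S.Int) (X : S.V) (x x' : S.Val)
      (hx : x ∈ S.RV X) (hx' : x' ∈ S.RV X), x ≠ x' ∧
    φ = CForm.box I hI (Event.imp (Event.prim X x hx) (Event.not (Event.prim X x' hx')))}

/-- D2 (definiteness): `[Y ← y](⋁_{x ∈ R(X)} X = x)`. -/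
def AxD2 (S : Signature) : Set (CForm S) :=
  {φ | ∃ (I : S.V → Option S.Val) (hI : I ∈ S.Int) (X : S.V)
      (l : List {x : S.Val // x ∈ S.RV X}),
    (∀ x : {x : S.Val // x ∈ S.RV X}, x ∈ l) ∧ φ = CForm.box I hI (Event.disjEq X l)}

/-- D3 (composition): `⟨X ← x⟩(W = w ∧ φ) ⇒ ⟨X ← x; W ← w⟩φ`. -/
def AxD3 (S : Signature) : Set (CForm S) :=
  {ψ | ∃ (I : S.V → Option S.Val) (hI : I ∈ S.Int) (W : S.V) (w : S.Val)
      (hw : w ∈ S.RV W) (hIW : updInt I W w ∈ S.Int) (e : Event S),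
    ψ = CForm.imp (CForm.dia I hI (Event.and (Event.prim W w hw) e))
          (CForm.dia (updInt I W w) hIW e)}

/-- D4 (effectiveness): `[X ← x](X = x)`. -/
def AxD4 (S : Signature) : Set (CForm S) :=
  {φ | ∃ (I : S.V → Option S.Val) (hI : I ∈ S.Int) (X : S.V) (x : S.Val)
      (hx : x ∈ S.RV X), I X = some x ∧ φ = CForm.box I hI (Event.prim X x hx)}

/-- D5 (reversibility), with `Z = V − (X ∪ {W, Y})`. -/
def AxD5 (S : Signature) : Set (CForm S) :=
  {φ | ∃ (I : S.V → Option S.Val) (hI : I ∈ S.Int) (Y : S.V) (y : S.Val)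
      (hy : y ∈ S.RV Y) (W : S.V) (w : S.Val) (hw : w ∈ S.RV W)
      (hIY : updInt I Y y ∈ S.Int) (hIW : updInt I W w ∈ S.Int)
      (lZ : List ((X : S.V) × {x : S.Val // x ∈ S.RV X})),
    (lZ.map Sigma.fst).Nodup ∧
    (∀ Z : S.V, (∃ p ∈ lZ, p.1 = Z) ↔ (I Z = none ∧ Z ≠ W ∧ Z ≠ Y)) ∧
    φ = CForm.imp
      (CForm.and
        (CForm.dia (updInt I Y y) hIY (Event.and (Event.prim W w hw) (Event.conjEqL lZ)))
        (CForm.dia (updInt I W w) hIW (Event.and (Event.prim Y y hy) (Event.conjEqL lZ))))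
      (CForm.dia I hI (Event.and (Event.prim W w hw)
        (Event.and (Event.prim Y y hy) (Event.conjEqL lZ))))}

/-- A disjunct of the formula `Y ⇝ Z` ("Y affects Z"). -/
noncomputable def ltComp (I : S.V → Option S.Val) (hI : I ∈ S.Int) (Y : S.V) (y : S.Val)
    (hIY : updInt I Y y ∈ S.Int) (Z : S.V) (z z' : S.Val)
    (hz : z ∈ S.RV Z) (hz' : z' ∈ S.RV Z) : CForm S :=
  CForm.and (CForm.box I hI (Event.prim Z z hz))
    (CForm.box (updInt I Y y) hIY (Event.prim Z z' hz'))

/-- `φ` is (an instance of) the formula `Y ⇝ Z`: the disjunction, over all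
interventions `X ← x`, values `y ∈ R(Y)` and `z ≠ z' ∈ R(Z)`, of
`[X ← x](Z = z) ∧ [X ← x; Y ← y](Z = z')`. -/
def IsLeadsTo (Y Z : S.V) (φ : CForm S) : Prop :=
  ∃ l : List (CForm S),
    (∀ ψ ∈ l, ∃ (I : S.V → Option S.Val) (hI : I ∈ S.Int) (y : S.Val)
        (_ : y ∈ S.RV Y) (hIY : updInt I Y y ∈ S.Int) (z z' : S.Val)
        (hz : z ∈ S.RV Z) (hz' : z' ∈ S.RV Z), z ≠ z' ∧
        ψ = ltComp I hI Y y hIY Z z z' hz hz') ∧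
    (∀ (I : S.V → Option S.Val) (hI : I ∈ S.Int) (y : S.Val), y ∈ S.RV Y →
      ∀ (hIY : updInt I Y y ∈ S.Int) (z z' : S.Val) (hz : z ∈ S.RV Z)
        (hz' : z' ∈ S.RV Z), z ≠ z' →
        ltComp I hI Y y hIY Z z z' hz hz' ∈ l) ∧
    φ = CForm.bigOr l

/-- D6 (recursiveness): `(X₀ ⇝ X₁ ∧ … ∧ X_{k−1} ⇝ X_k) ⇒ ¬(X_k ⇝ X₀)`. -/
def AxD6 (S : Signature) : Set (CForm S) :=
  {φ | ∃ (k : ℕ) (Xs : Fin (k+1) → S.V) (fs : Fin k → CForm S) (g : CForm S),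
    (∀ i : Fin k, IsLeadsTo (Xs i.castSucc) (Xs i.succ) (fs i)) ∧
    IsLeadsTo (Xs (Fin.last k)) (Xs 0) g ∧
    φ = CForm.imp (CForm.bigAnd (List.ofFn fs)) (CForm.not g)}

/-- D7 (distribution): `([X ← x]φ ∧ [X ← x](φ ⇒ ψ)) ⇒ [X ← x]ψ`. -/
def AxD7 (S : Signature) : Set (CForm S) :=
  {φ | ∃ (I : S.V → Option S.Val) (hI : I ∈ S.Int) (a b : Event S),
    φ = CForm.imp (CForm.and (CForm.box I hI a) (CForm.box I hI (Event.imp a b)))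
          (CForm.box I hI b)}

/-- D8 (generalization): `[X ← x]φ` for `φ` a propositional tautology. -/
def AxD8 (S : Signature) : Set (CForm S) :=
  {φ | ∃ (I : S.V → Option S.Val) (hI : I ∈ S.Int) (e : Event S), e.Taut ∧
    φ = CForm.box I hI e}

/-- D9 (unique outcomes for `V − {X}`): `⟨Y ← y⟩true ∧ (⟨Y ← y⟩φ ⇒ [Y ← y]φ)`
for `Y = V − {X}`. -/
def AxD9 (S : Signature) : Set (CForm S) :=
  {φ | ∃ (I : S.V → Option S.Val) (hI : I ∈ S.Int) (X : S.V) (e : Event S),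
    I X = none ∧ (∀ Z, Z ≠ X → I Z ≠ none) ∧
    φ = CForm.and (CForm.dia I hI Event.tru)
          (CForm.imp (CForm.dia I hI e) (CForm.box I hI e))}

/-- Halpern's version of D9: `⟨Y ← y⟩true ∧ ⋁_{x ∈ R(X)} [Y ← y](X = x)`
for `Y = V − {X}`. -/
def AxHD9 (S : Signature) : Set (CForm S) :=
  {φ | ∃ (I : S.V → Option S.Val) (hI : I ∈ S.Int) (X : S.V)
      (l : List {x : S.Val // x ∈ S.RV X}),
    I X = none ∧ (∀ Z, Z ≠ X → I Z ≠ none) ∧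
    (∀ x : {x : S.Val // x ∈ S.RV X}, x ∈ l) ∧
    φ = CForm.and (CForm.dia I hI Event.tru)
          (CForm.bigOr (l.map fun x => CForm.box I hI (Event.prim X x.1 x.2)))}

/-- D10(a) (at least one outcome): `⟨Y ← y⟩true`. -/
def AxD10a (S : Signature) : Set (CForm S) :=
  {φ | ∃ (I : S.V → Option S.Val) (hI : I ∈ S.Int), φ = CForm.dia I hI Event.tru}

/-- D10(b) (at most one outcome): `⟨Y ← y⟩φ ⇒ [Y ← y]φ`. -/
def AxD10b (S : Signature) : Set (CForm S) :=
  {φ | ∃ (I : S.V → Option S.Val) (hI : I ∈ S.Int) (e : Event S),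
    φ = CForm.imp (CForm.dia I hI e) (CForm.box I hI e)}

/-! ### The axiom schema D6⁺ -/

/-- `X_{-i} = ȳ` : the conjunction of `X_j = g j` over the indices `j ≠ i`. -/
def Event.conjEqVec {k : ℕ} (Xs : Fin k → S.V)
    (g : ∀ j : Fin k, {x : S.Val // x ∈ S.RV (Xs j)}) (i : Fin k) : Event S :=
  Event.bigAnd (((List.finRange k).filter (fun j => j ≠ i)).map
    fun j => Event.prim (Xs j) (g j).1 (g j).2)

/-- A disjunct of the formula `X_i ⇝_{I',U₁,…,U_k,X₁,…,X_k} X_{−i}`: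
`[I; X_i ← x](X_{−i} = ȳ) ∧ [I; X_i ← x'](X_{−i} ≠ ȳ)`. -/
noncomputable def affComp {k : ℕ} (Xs : Fin k → S.V) (i : Fin k) (I : S.V → Option S.Val)
    (x x' : {v : S.Val // v ∈ S.RV (Xs i)})
    (hx : updInt I (Xs i) x.1 ∈ S.Int) (hx' : updInt I (Xs i) x'.1 ∈ S.Int)
    (g : ∀ j : Fin k, {v : S.Val // v ∈ S.RV (Xs j)}) : CForm S :=
  CForm.and (CForm.box (updInt I (Xs i) x.1) hx (Event.conjEqVec Xs g i))
    (CForm.box (updInt I (Xs i) x'.1) hx' (Event.not (Event.conjEqVec Xs g i)))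

/-- `φ` is (an instance of) the formula `X_i ⇝_{I',U₁,…,U_k,X₁,…,X_k} X_{−i}`. -/
def IsAffects {k : ℕ} (Xs : Fin k → S.V) (Us : Fin k → Set S.Val)
    (Is : Set (S.V → Option S.Val)) (i : Fin k) (φ : CForm S) : Prop :=
  ∃ l : List (CForm S),
    (∀ ψ ∈ l, ∃ (I : S.V → Option S.Val) (x x' : {v : S.Val // v ∈ S.RV (Xs i)})
        (hx : updInt I (Xs i) x.1 ∈ S.Int) (hx' : updInt I (Xs i) x'.1 ∈ S.Int)
        (g : ∀ j : Fin k, {v : S.Val // v ∈ S.RV (Xs j)}),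
        I ∈ Is ∧ x.1 ∈ Us i ∧ x'.1 ∈ Us i ∧ (∀ j, j ≠ i → (g j).1 ∈ Us j) ∧
        ψ = affComp Xs i I x x' hx hx' g) ∧
    (∀ (I : S.V → Option S.Val), I ∈ Is →
      ∀ (x x' : {v : S.Val // v ∈ S.RV (Xs i)})
        (hx : updInt I (Xs i) x.1 ∈ S.Int) (hx' : updInt I (Xs i) x'.1 ∈ S.Int)
        (g : ∀ j : Fin k, {v : S.Val // v ∈ S.RV (Xs j)}),
        x.1 ∈ Us i → x'.1 ∈ Us i → (∀ j, j ≠ i → (g j).1 ∈ Us j) →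
        affComp Xs i I x x' hx hx' g ∈ l) ∧
    φ = CForm.bigOr l

/-- D6⁺: `⋁_{i=1}^k ¬(X_i ⇝_{I',U₁,…,U_k,X₁,…,X_k} X_{−i})`, one instance for
each finite choice of variables `X₁,…,X_k`, finite value sets `U_i ⊆ R(X_i)`,
and finite set `I'` of allowed interventions. -/
def AxD6p (S : Signature) : Set (CForm S) :=
  {φ | ∃ (k : ℕ) (Xs : Fin k → S.V) (Us : Fin k → Set S.Val)
      (Is : Set (S.V → Option S.Val)) (fs : Fin k → CForm S),
    (∀ j, Us j ⊆ S.RV (Xs j)) ∧ (∀ j, (Us j).Finite) ∧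
    Is ⊆ S.Int ∧ Is.Finite ∧
    (∀ i, IsAffects Xs Us Is i (fs i)) ∧
    φ = CForm.bigOr (List.ofFn fun i => CForm.not (fs i))}

/-! ### Axiom systems and provability -/

def AXplus (S : Signature) : Set (CForm S) :=
  AxD0 S ∪ AxD1 S ∪ AxD2 S ∪ AxD3 S ∪ AxD4 S ∪ AxD5 S ∪ AxD7 S ∪ AxD8 S ∪ AxD9 S

def AXplusRec (S : Signature) : Set (CForm S) :=
  AxD0 S ∪ AxD1 S ∪ AxD2 S ∪ AxD3 S ∪ AxD4 S ∪ AxD6 S ∪ AxD7 S ∪ AxD8 S ∪ AxD9 S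
    ∪ AxD10a S ∪ AxD10b S

def AXbasic (S : Signature) : Set (CForm S) :=
  AxD0 S ∪ AxD1 S ∪ AxD2 S ∪ AxD4 S ∪ AxD7 S ∪ AxD8 S

def AXbasicRec (S : Signature) : Set (CForm S) := AXbasic S ∪ AxD6p S

def AXminus (S : Signature) : Set (CForm S) :=
  AxD0 S ∪ AxD2 S ∪ AxD3 S ∪ AxD6 S ∪ AxD7 S ∪ AxD8 S ∪ AxD10a S ∪ AxD10b S

def AXEQ (S : Signature) : Set (CForm S) :=
  AxD0 S ∪ AxD1 S ∪ AxD2 S ∪ AxD7 S ∪ AxD8 S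

/-- Provability from a set of axioms, with modus ponens. -/
inductive Provable (Ax : Set (CForm S)) : CForm S → Prop
  | ax {φ} : φ ∈ Ax → Provable Ax φ
  | mp {φ ψ} : Provable Ax (CForm.imp φ ψ) → Provable Ax φ → Provable Ax ψ

/-- Provability from a set of axioms, with modus ponens and the inference rule
D2⁺, relative to named variables `W`, named values `R'`, and a language `L`. -/
inductive ProvableStar (Ax : Set (CForm S)) (W : Set S.V) (R' : S.V → Set S.Val)
    (L : Set (CForm S)) : CForm S → Prop
  | ax {φ} : φ ∈ Ax → ProvableStar Ax W R' L φ
  | mp {φ ψ} : ProvableStar Ax W R' L (CForm.imp φ ψ) → ProvableStar Ax W R' L φ →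
      ProvableStar Ax W R' L ψ
  | d2plus {φ : CForm S} {I : S.V → Option S.Val} {hI : I ∈ S.Int} {ψ : Event S}
      {X : S.V} (hXW : X ∈ W)
      (l : List {x : S.Val // x ∈ S.RV X})
      (hsub : ∀ x ∈ l, x.1 ∈ R' X)
      (hmem : ∀ (x : S.Val) (hx : x ∈ S.RV X),
        (CForm.imp φ (CForm.box I hI ψ)).mentionsVal X x →
        (⟨x, hx⟩ : {x : S.Val // x ∈ S.RV X}) ∈ l)
      (hfresh : (∃ x ∈ R' X, ¬ (CForm.imp φ (CForm.box I hI ψ)).mentionsVal X x) →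
        ∃ x ∈ l, ¬ (CForm.imp φ (CForm.box I hI ψ)).mentionsVal X x.1)
      (hL : CForm.imp φ (CForm.box I hI (Event.not ψ)) ∈ L)
      (hprem : ProvableStar Ax W R' L
        (CForm.imp φ (CForm.bigAnd (l.map fun x =>
          CForm.box I hI (Event.imp ψ (Event.not (Event.prim X x.1 x.2)))))))
      : ProvableStar Ax W R' L (CForm.imp φ (CForm.box I hI (Event.not ψ)))

/-! ### Properties of GSEMs -/

/-- Coherence: if `v` is an outcome of `X ← x` and `v` agrees with a finite
extension `X ← x; Y ← y` of the intervention, then `v` is an outcome of the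
extended intervention. -/
def GSEM.Coherent (M : GSEM S) : Prop :=
  ∀ (I₁ : S.V → Option S.Val) (h₁ : I₁ ∈ S.Int) (I₂ : S.V → Option S.Val)
    (h₂ : I₂ ∈ S.Int),
    (∀ X x, I₁ X = some x → I₂ X = some x) →
    {X | I₁ X = none ∧ I₂ X ≠ none}.Finite →
    ∀ (u : Context S) (v : Assignment S), v ∈ M.F I₁ h₁ u →
      (∀ X x, I₂ X = some x → v.1 X = x) → v ∈ M.F I₂ h₂ u

/-- Condition Acyc1 for a GSEM, a context, and a strict order on the variables. -/
def GSEM.Acyc1At (M : GSEM S) (u : Context S) (lt : S.V → S.V → Prop) : Prop :=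
  ∀ (X : S.V) (x x' : S.Val), x ∈ S.RV X → x' ∈ S.RV X →
    ∀ (I : S.V → Option S.Val), I ∈ S.Int →
      ∀ (hx : updInt I X x ∈ S.Int) (hx' : updInt I X x' ∈ S.Int),
        restrictSet (M.F (updInt I X x) hx u) {Y | lt Y X}
          = restrictSet (M.F (updInt I X x') hx' u) {Y | lt Y X}

/-- An acyclic GSEM: for each context there is a total order on the endogenous
variables satisfying Acyc1. -/
def GSEM.Acyclic (M : GSEM S) : Prop :=
  ∀ u : Context S, ∃ lt : S.V → S.V → Prop, IsStrictTotalOrder S.V lt ∧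
    M.Acyc1At u lt

/-! ### Consistency and acceptability -/

/-- A set of formulas is consistent with a provability notion `Pr` if the
negation of the conjunction of no finite subset is provable. -/
def Consistent (Pr : CForm S → Prop) (C : Set (CForm S)) : Prop :=
  ∀ l : List (CForm S), (∀ ψ ∈ l, ψ ∈ C) → ¬ Pr (CForm.not (CForm.bigAnd l))

def MaxConsistent (Pr : CForm S → Prop) (C : Set (CForm S)) : Prop :=
  Consistent Pr C ∧ ∀ ψ ∉ C, ¬ Consistent Pr (insert ψ C)

/-- `C` is acceptable for `⟨Y ← y⟩φ` with respect to `Z`: some conjunctive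
formula `ψ` extends the conjuncts of `φ`, contains a conjunct `Z = z` with `z`
a named value, and `⟨Y ← y⟩ψ ∈ C`. -/
def AcceptableFor (C : Set (CForm S)) (I : S.V → Option S.Val) (hI : I ∈ S.Int)
    (φ : Event S) (R' : S.V → Set S.Val) (Z : S.V) : Prop :=
  ∃ ψ : Event S, ψ.Conjunctive ∧ φ.conjuncts ⊆ ψ.conjuncts ∧
    (∃ (z : S.Val) (hz : z ∈ S.RV Z), z ∈ R' Z ∧ Event.prim Z z hz ∈ ψ.conjuncts) ∧
    CForm.dia I hI ψ ∈ C

end Causal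

namespace Causal


variable {S : Signature}

/-! #### Boolean evaluation helpers -/

lemma event_imp_true (val : S.V → S.Val → Bool) (a b : Event S) :
    Event.evalB val (a.imp b) = true ↔
      (Event.evalB val a = true → Event.evalB val b = true) := by
  cases h : Event.evalB val a <;> simp [Event.imp, Event.evalB, h]

lemma event_and_true (val : S.V → S.Val → Bool) (a b : Event S) :
    Event.evalB val (a.and b) = true ↔
      (Event.evalB val a = true ∧ Event.evalB val b = true) := by
  simp [Event.evalB]

lemma event_not_true (val : S.V → S.Val → Bool) (a : Event S) :
    Event.evalB val (a.not) = true ↔ ¬ (Event.evalB val a = true) := by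
  simp [Event.evalB]

lemma cform_imp_true (val : (S.V → Option S.Val) → Event S → Bool) (a b : CForm S) :
    CForm.evalB val (a.imp b) = true ↔
      (CForm.evalB val a = true → CForm.evalB val b = true) := by
  cases h : CForm.evalB val a <;> simp [CForm.imp, CForm.evalB, h]

lemma cform_and_true (val : (S.V → Option S.Val) → Event S → Bool) (a b : CForm S) :
    CForm.evalB val (a.and b) = true ↔
      (CForm.evalB val a = true ∧ CForm.evalB val b = true) := by
  simp [CForm.evalB]

lemma evalB_bigAnd (val : S.V → S.Val → Bool) (l : List (Event S)) :
    Event.evalB val (Event.bigAnd l) = true ↔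
      ∀ e ∈ l, Event.evalB val e = true := by
  induction l with
  | nil => simp [Event.bigAnd, Event.evalB]
  | cons e l ih => simp [Event.bigAnd, Event.evalB, ih.symm]

lemma evalB_bigOr (val : S.V → S.Val → Bool) (l : List (Event S)) :
    Event.evalB val (Event.bigOr l) = true ↔
      ∃ e ∈ l, Event.evalB val e = true := by
  induction l with
  | nil => simp [Event.bigOr, Event.evalB]
  | cons e l ih => simp [Event.bigOr, Event.evalB, ih.symm]

lemma sat_bigAnd (w : Assignment S) (l : List (Event S)) :
    Event.sat w (Event.bigAnd l) ↔ ∀ e ∈ l, Event.sat w e := by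
  induction l with
  | nil => simp [Event.bigAnd, Event.sat]
  | cons e l ih => simp [Event.bigAnd, Event.sat, ih.symm]

/-! #### Provability helpers -/

lemma prov_taut {φ : CForm S} (h : φ.Taut) : Provable (AXbasic S) φ :=
  Provable.ax (Or.inl (Or.inl (Or.inl (Or.inl (Or.inl h)))))

lemma prov_d1 {J : S.V → Option S.Val} (hJ : J ∈ S.Int) {X : S.V} {x x' : S.Val}
    (hx : x ∈ S.RV X) (hx' : x' ∈ S.RV X) (hne : x ≠ x') :
    Provable (AXbasic S) (CForm.box J hJ
      (Event.imp (Event.prim X x hx) (Event.not (Event.prim X x' hx')))) :=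
  Provable.ax (Or.inl (Or.inl (Or.inl (Or.inl (Or.inr
    ⟨J, hJ, X, x, x', hx, hx', hne, rfl⟩)))))

lemma prov_d2 {J : S.V → Option S.Val} (hJ : J ∈ S.Int) {X : S.V}
    {l : List {x : S.Val // x ∈ S.RV X}} (hl : ∀ x : {x : S.Val // x ∈ S.RV X}, x ∈ l) :
    Provable (AXbasic S) (CForm.box J hJ (Event.disjEq X l)) :=
  Provable.ax (Or.inl (Or.inl (Or.inl (Or.inr ⟨J, hJ, X, l, hl, rfl⟩))))

lemma prov_d7 {J : S.V → Option S.Val} (hJ : J ∈ S.Int) (a b : Event S) :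
    Provable (AXbasic S) (CForm.imp
      (CForm.and (CForm.box J hJ a) (CForm.box J hJ (Event.imp a b)))
      (CForm.box J hJ b)) :=
  Provable.ax (Or.inl (Or.inr ⟨J, hJ, a, b, rfl⟩))

lemma prov_box_taut {J : S.V → Option S.Val} (hJ : J ∈ S.Int) {e : Event S}
    (h : e.Taut) : Provable (AXbasic S) (CForm.box J hJ e) :=
  Provable.ax (Or.inr ⟨J, hJ, e, h, rfl⟩)

lemma prov_mp2 {p q r : CForm S}
    (h : Provable (AXbasic S) (CForm.imp (CForm.and p q) r))
    (hp : Provable (AXbasic S) p) (hq : Provable (AXbasic S) q) :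
    Provable (AXbasic S) r := by
  have t : CForm.Taut (CForm.imp (CForm.imp (CForm.and p q) r)
      (CForm.imp p (CForm.imp q r))) := by
    intro val; simp only [cform_imp_true, cform_and_true]; tauto
  exact Provable.mp (Provable.mp (Provable.mp (prov_taut t) h) hp) hq

lemma prov_imp_of_and_imp {p q r : CForm S}
    (h : Provable (AXbasic S) (CForm.imp (CForm.and p q) r))
    (hq : Provable (AXbasic S) q) :
    Provable (AXbasic S) (CForm.imp p r) := by
  have t : CForm.Taut (CForm.imp (CForm.imp (CForm.and p q) r)
      (CForm.imp q (CForm.imp p r))) := by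
    intro val; simp only [cform_imp_true, cform_and_true]; tauto
  exact Provable.mp (Provable.mp (prov_taut t) h) hq

lemma prov_box_mp {J : S.V → Option S.Val} {hJ : J ∈ S.Int} {a b : Event S}
    (hab : Provable (AXbasic S) (CForm.box J hJ (Event.imp a b)))
    (ha : Provable (AXbasic S) (CForm.box J hJ a)) :
    Provable (AXbasic S) (CForm.box J hJ b) :=
  prov_mp2 (prov_d7 hJ a b) ha hab

lemma prov_box_and {J : S.V → Option S.Val} {hJ : J ∈ S.Int} {a b : Event S}
    (ha : Provable (AXbasic S) (CForm.box J hJ a))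
    (hb : Provable (AXbasic S) (CForm.box J hJ b)) :
    Provable (AXbasic S) (CForm.box J hJ (a.and b)) := by
  have t : Event.Taut (Event.imp a (Event.imp b (a.and b))) := by
    intro val; simp only [event_imp_true, event_and_true]; tauto
  exact prov_box_mp (prov_box_mp (prov_box_taut hJ t) ha) hb

lemma prov_box_bigAnd {J : S.V → Option S.Val} {hJ : J ∈ S.Int} {l : List (Event S)}
    (h : ∀ e ∈ l, Provable (AXbasic S) (CForm.box J hJ e)) :
    Provable (AXbasic S) (CForm.box J hJ (Event.bigAnd l)) := by
  induction l with
  | nil =>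
    exact prov_box_taut hJ (by intro val; simp [Event.bigAnd, Event.evalB])
  | cons e l ih =>
    exact prov_box_and (h e (by simp)) (ih fun e' he' => h e' (by simp [he']))


open Classical in
/-- The D1-style event `X = x ⇒ X ≠ x'` (or `true` when `x = x'`). -/
noncomputable def d1e (S : Signature) (X : S.V)
    (x x' : {v : S.Val // v ∈ S.RV X}) : Event S :=
  if x.1 = x'.1 then Event.tru
  else Event.imp (Event.prim X x.1 x.2) (Event.not (Event.prim X x'.1 x'.2))

lemma prov_d1e {J : S.V → Option S.Val} (hJ : J ∈ S.Int) (X : S.V)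
    (x x' : {v : S.Val // v ∈ S.RV X}) :
    Provable (AXbasic S) (CForm.box J hJ (d1e S X x x')) := by
  by_cases hxx : x.1 = x'.1
  · unfold d1e; rw [if_pos hxx]
    exact prov_box_taut hJ (by intro val; simp [Event.evalB])
  · unfold d1e; rw [if_neg hxx]
    exact prov_d1 hJ x.2 x'.2 hxx

lemma d1e_eval {X : S.V} {x x' : {v : S.Val // v ∈ S.RV X}}
    {val : S.V → S.Val → Bool}
    (h : Event.evalB val (d1e S X x x') = true)
    (h1 : val X x.1 = true) (h2 : val X x'.1 = true) : x.1 = x'.1 := by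
  by_cases hxx : x.1 = x'.1
  · exact hxx
  · unfold d1e at h; rw [if_neg hxx, event_imp_true] at h
    have h' := h h1
    rw [event_not_true] at h'
    exact absurd h2 h'

/-- The list of all D2 and D1 events over the variables in `lV`. -/
noncomputable def DLof (S : Signature) (lV : List S.V)
    (lX : ∀ X : S.V, List {x : S.Val // x ∈ S.RV X}) : List (Event S) :=
  (lV.map fun X => Event.disjEq X (lX X)) ++
  (lV.flatMap fun X => (lX X).flatMap fun x => (lX X).map fun x' => d1e S X x x')

/-- Let `S` be a finite signature.  For every event `ρ` and
every allowed intervention `Y ← y ∈ I`, `AX⁺_basic` proves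
`[Y ← y]ρ ⇔ [Y ← y](⋀_{v ⊨ ¬ρ} ¬(V = v))`, where the conjunction ranges over
all assignments `v ∈ R(V)` not satisfying `ρ` (enumerated by the list `lA`)
and `V = v` abbreviates `⋀_{X ∈ V} X = v[X]` (with `V` enumerated by `lV`). -/
theorem box_iff_conj_of_nonsolutions (S : Signature) (hfin : S.IsFinite)
    (lV : List S.V) (hlV : ∀ X : S.V, X ∈ lV) (hndV : lV.Nodup)
    (I : S.V → Option S.Val) (hI : I ∈ S.Int) (ρ : Event S)
    (lA : List (Assignment S)) (hndA : lA.Nodup)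
    (hlA : ∀ v : Assignment S, v ∈ lA ↔ ¬ ρ.sat v) :
    Provable (AXbasic S) (CForm.iff (CForm.box I hI ρ)
      (CForm.box I hI (Event.bigAnd (lA.map fun v =>
        Event.not (Event.bigAnd (lV.map fun X => Event.prim X (v.1 X) (v.2 X))))))) := by
  classical
  obtain ⟨_, _, _, hRVfin⟩ := hfin
  have ftX : ∀ X : S.V, Fintype {x : S.Val // x ∈ S.RV X} := fun X => (hRVfin X).fintype
  set lX : ∀ X : S.V, List {x : S.Val // x ∈ S.RV X} :=
    fun X => (@Finset.univ _ (ftX X)).toList with hlXdef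
  have hlX : ∀ (X : S.V) (x : {x : S.Val // x ∈ S.RV X}), x ∈ lX X :=
    fun X x => Finset.mem_toList.mpr (Finset.mem_univ x)
  set ψ := Event.bigAnd (lA.map fun v =>
    Event.not (Event.bigAnd (lV.map fun X => Event.prim X (v.1 X) (v.2 X)))) with hψdef
  set DL := DLof S lV lX with hDLdef
  -- [I] (big conjunction of D1/D2 facts) is provable
  have hDL : Provable (AXbasic S) (CForm.box I hI (Event.bigAnd DL)) := by
    apply prov_box_bigAnd
    intro e he
    rcases List.mem_append.mp he with h | h
    · rcases List.mem_map.mp h with ⟨X, hX, rfl⟩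
      exact prov_d2 hI (hlX X)
    · rcases List.mem_flatMap.mp h with ⟨X, hX, h⟩
      rcases List.mem_flatMap.mp h with ⟨x, hx, h⟩
      rcases List.mem_map.mp h with ⟨x', hx', rfl⟩
      exact prov_d1e hI X x x'
  -- the semantic core: under the D1/D2 facts, ρ and ψ are equivalent
  have key : ∀ val : S.V → S.Val → Bool,
      Event.evalB val (Event.bigAnd DL) = true →
      (Event.evalB val ρ = true ↔ Event.evalB val ψ = true) := by
    intro val hD
    rw [evalB_bigAnd] at hD
    have hex : ∀ X : S.V, ∃ x : {x : S.Val // x ∈ S.RV X}, val X x.1 = true := by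
      intro X
      have h := hD _ (List.mem_append_left _
        (List.mem_map_of_mem (f := fun X => Event.disjEq X (lX X)) (hlV X)))
      unfold Event.disjEq at h
      rw [evalB_bigOr] at h
      rcases h with ⟨e, he, hval⟩
      rcases List.mem_map.mp he with ⟨x, hx, rfl⟩
      exact ⟨x, hval⟩
    have huval : ∀ (X : S.V) (x x' : {x : S.Val // x ∈ S.RV X}),
        val X x.1 = true → val X x'.1 = true → x.1 = x'.1 := by
      intro X x x' h1 h2
      refine d1e_eval (hD (d1e S X x x') ?_) h1 h2
      exact List.mem_append_right _ (List.mem_flatMap.mpr ⟨X, hlV X,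
        List.mem_flatMap.mpr ⟨x, hlX X x, List.mem_map.mpr ⟨x', hlX X x', rfl⟩⟩⟩)
    choose wf hwf using hex
    set w : Assignment S := ⟨fun X => (wf X).1, fun X => (wf X).2⟩ with hwdef
    have hval : ∀ (X : S.V) (x : S.Val), x ∈ S.RV X →
        (val X x = true ↔ w.1 X = x) := by
      intro X x hx
      constructor
      · intro h; exact (huval X ⟨x, hx⟩ (wf X) h (hwf X)).symm
      · intro h; rw [← h]; exact hwf X
    have hsat : ∀ e : Event S, (Event.evalB val e = true ↔ Event.sat w e) := by
      intro e
      induction e with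
      | tru => simp [Event.evalB, Event.sat]
      | prim X x hx => simpa [Event.evalB, Event.sat] using hval X x hx
      | not e ih => simp [Event.evalB, Event.sat, ← ih]
      | and a b iha ihb => simp [Event.evalB, Event.sat, ← iha, ← ihb]
      | or a b iha ihb => simp [Event.evalB, Event.sat, ← iha, ← ihb]
    rw [hsat ρ, hsat ψ]
    have hψsat : Event.sat w ψ ↔ ∀ v ∈ lA, w ≠ v := by
      rw [hψdef, sat_bigAnd]
      constructor
      · intro h v hv hveq
        subst hveq
        have h' := h _ (List.mem_map_of_mem hv)
        exact h' ((sat_bigAnd w _).mpr (by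
          intro e he
          rcases List.mem_map.mp he with ⟨X, hX, rfl⟩
          rfl))
      · intro h e he
        rcases List.mem_map.mp he with ⟨v, hv, rfl⟩
        intro hc
        rw [sat_bigAnd] at hc
        apply h v hv
        apply Subtype.ext; funext X
        exact hc _ (List.mem_map_of_mem (hlV X))
    rw [hψsat]
    constructor
    · intro hρ v hv hveq
      exact (hlA v).mp hv (hveq ▸ hρ)
    · intro h
      by_contra hρ
      exact h w ((hlA w).mpr hρ) rfl
  -- assemble the provability argument
  have t1 : Event.Taut (Event.imp (Event.bigAnd DL) (Event.imp ρ ψ)) := by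
    intro val
    rw [event_imp_true, event_imp_true]
    intro hD hρ
    exact (key val hD).1 hρ
  have t2 : Event.Taut (Event.imp (Event.bigAnd DL) (Event.imp ψ ρ)) := by
    intro val
    rw [event_imp_true, event_imp_true]
    intro hD hψ
    exact (key val hD).2 hψ
  have hb1 : Provable (AXbasic S) (CForm.box I hI (Event.imp ρ ψ)) :=
    prov_box_mp (prov_box_taut hI t1) hDL
  have hb2 : Provable (AXbasic S) (CForm.box I hI (Event.imp ψ ρ)) :=
    prov_box_mp (prov_box_taut hI t2) hDL
  have h1 : Provable (AXbasic S) (CForm.imp (CForm.box I hI ρ) (CForm.box I hI ψ)) :=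
    prov_imp_of_and_imp (prov_d7 hI ρ ψ) hb1
  have h2 : Provable (AXbasic S) (CForm.imp (CForm.box I hI ψ) (CForm.box I hI ρ)) :=
    prov_imp_of_and_imp (prov_d7 hI ψ ρ) hb2
  have t3 : CForm.Taut (CForm.imp (CForm.imp (CForm.box I hI ρ) (CForm.box I hI ψ))
      (CForm.imp (CForm.imp (CForm.box I hI ψ) (CForm.box I hI ρ))
        (CForm.iff (CForm.box I hI ρ) (CForm.box I hI ψ)))) := by
    intro val
    simp only [CForm.iff, cform_imp_true, cform_and_true]
    tauto
  exact Provable.mp (Provable.mp (prov_taut t3) h1) h2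


end Causal
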